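/- If X and Y are independent integrable real random variables with 2E|X-Y| - E|X-X'| - E|Y-Y'| = 0 (X', Y' independent copies), then X and Y are identically distributed. -/

import Mathlib

open MeasureTheory ProbabilityTheory Set ENNReal

-- pointwise ENNReal algebra lemma
lemma energy_pt (a b : ℝ≥0∞) (ha : a ≤ 1) (hb : b ≤ 1) :
    2 * (a * (1 - b) + b * (1 - a))
      = (a * (1 - a) + a * (1 - a)) + ((b * (1 - b) + b * (1 - b))
        + 2 * ((a - b) ^ 2 + (b - a) ^ 2)) := by
  have hat : a ≠ ∞ := (ha.trans_lt ENNReal.one_lt_top).ne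
  have hbt : b ≠ ∞ := (hb.trans_lt ENNReal.one_lt_top).ne
  rcases le_total b a with hab | hab
  · obtain ⟨c, rfl⟩ := exists_add_of_le hab
    obtain ⟨d, h1⟩ := exists_add_of_le ha
    have e1 : (1 : ℝ≥0∞) - b = c + d := by
      rw [h1, add_assoc]; exact ENNReal.add_sub_cancel_left hbt
    have e2 : (1 : ℝ≥0∞) - (b + c) = d := by
      rw [h1]; exact ENNReal.add_sub_cancel_left hat
    have e3 : (b + c) - b = c := ENNReal.add_sub_cancel_left hbt
    have e4 : b - (b + c) = 0 := tsub_eq_zero_of_le le_self_add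
    rw [e1, e2, e3, e4]; ring
  · obtain ⟨c, rfl⟩ := exists_add_of_le hab
    obtain ⟨d, h1⟩ := exists_add_of_le hb
    have e1 : (1 : ℝ≥0∞) - a = c + d := by
      rw [h1, add_assoc]; exact ENNReal.add_sub_cancel_left hat
    have e2 : (1 : ℝ≥0∞) - (a + c) = d := by
      rw [h1]; exact ENNReal.add_sub_cancel_left hbt
    have e3 : (a + c) - a = c := ENNReal.add_sub_cancel_left hat
    have e4 : a - (a + c) = 0 := tsub_eq_zero_of_le le_self_add
    rw [e1, e2, e3, e4]; ring

lemma energy_mem_Ico (x y t : ℝ) :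
    t ∈ Ico (min x y) (max x y) ↔ (x ≤ t ∧ t < y) ∨ (y ≤ t ∧ t < x) := by
  simp only [mem_Ico, min_le_iff, lt_max_iff]
  constructor
  · rintro ⟨h1 | h1, h2 | h2⟩
    · linarith
    · exact Or.inl ⟨h1, h2⟩
    · exact Or.inr ⟨h1, h2⟩
    · linarith
  · rintro (⟨h1, h2⟩ | ⟨h1, h2⟩)
    · exact ⟨Or.inl h1, Or.inr h2⟩
    · exact ⟨Or.inr h1, Or.inl h2⟩

lemma energy_ofReal_abs (x y : ℝ) :
    ENNReal.ofReal |x - y|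
      = ∫⁻ t, (Ico (min x y) (max x y)).indicator (fun _ => (1 : ℝ≥0∞)) t := by
  rw [lintegral_indicator measurableSet_Ico, setLIntegral_one, Real.volume_Ico,
    max_sub_min_eq_abs, abs_sub_comm]

lemma energy_key {Ω : Type*} [MeasurableSpace Ω] (μ : Measure Ω) [IsProbabilityMeasure μ]
    (X Y : Ω → ℝ) (hX : Measurable X) (hY : Measurable Y) (h : IndepFun X Y μ) :
    ∫⁻ ω, ENNReal.ofReal |X ω - Y ω| ∂μ
      = ∫⁻ t, μ.map X (Iic t) * μ.map Y (Ioi t) + μ.map Y (Iic t) * μ.map X (Ioi t) := by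
  have hswap :
      ∫⁻ ω, ∫⁻ t, (Ico (min (X ω) (Y ω)) (max (X ω) (Y ω))).indicator
          (fun _ => (1 : ℝ≥0∞)) t ∂(volume : Measure ℝ) ∂μ
        = ∫⁻ t, ∫⁻ ω, (Ico (min (X ω) (Y ω)) (max (X ω) (Y ω))).indicator
          (fun _ => (1 : ℝ≥0∞)) t ∂μ ∂(volume : Measure ℝ) := by
    apply lintegral_lintegral_swap
    have hA : MeasurableSet {p : Ω × ℝ |
        min (X p.1) (Y p.1) ≤ p.2 ∧ p.2 < max (X p.1) (Y p.1)} := by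
      apply MeasurableSet.inter
      · exact measurableSet_le (((hX.comp measurable_fst).min
          (hY.comp measurable_fst))) measurable_snd
      · exact measurableSet_lt measurable_snd ((hX.comp measurable_fst).max
          (hY.comp measurable_fst))
    have : (Function.uncurry fun ω t =>
        (Ico (min (X ω) (Y ω)) (max (X ω) (Y ω))).indicator (fun _ => (1 : ℝ≥0∞)) t)
        = ({p : Ω × ℝ | min (X p.1) (Y p.1) ≤ p.2 ∧ p.2 < max (X p.1) (Y p.1)}).indicator
          (fun _ => (1 : ℝ≥0∞)) := by
      ext ⟨ω, t⟩
      simp [Function.uncurry, Set.indicator_apply, Set.mem_Ico]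
    rw [this]
    exact (measurable_const.indicator hA).aemeasurable
  calc ∫⁻ ω, ENNReal.ofReal |X ω - Y ω| ∂μ
      = ∫⁻ ω, ∫⁻ t, (Ico (min (X ω) (Y ω)) (max (X ω) (Y ω))).indicator
          (fun _ => (1 : ℝ≥0∞)) t ∂(volume : Measure ℝ) ∂μ := by
        simp_rw [energy_ofReal_abs]
    _ = ∫⁻ t, ∫⁻ ω, (Ico (min (X ω) (Y ω)) (max (X ω) (Y ω))).indicator
          (fun _ => (1 : ℝ≥0∞)) t ∂μ ∂(volume : Measure ℝ) := hswap
    _ = ∫⁻ t, μ.map X (Iic t) * μ.map Y (Ioi t) + μ.map Y (Iic t) * μ.map X (Ioi t) := by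
        apply lintegral_congr
        intro t
        have hset : (fun ω => (Ico (min (X ω) (Y ω)) (max (X ω) (Y ω))).indicator
            (fun _ => (1 : ℝ≥0∞)) t)
            = ((X ⁻¹' Iic t ∩ Y ⁻¹' Ioi t) ∪ (Y ⁻¹' Iic t ∩ X ⁻¹' Ioi t)).indicator
              (fun _ => (1 : ℝ≥0∞)) := by
          ext ω
          simp only [Set.indicator_apply, Set.mem_union, Set.mem_inter_iff, Set.mem_preimage,
            Set.mem_Iic, Set.mem_Ioi]
          congr 1
          rw [eq_iff_iff]
          exact (energy_mem_Ico (X ω) (Y ω) t)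
        rw [hset, lintegral_indicator, setLIntegral_one, measure_union, 
          h.measure_inter_preimage_eq_mul _ _ measurableSet_Iic measurableSet_Ioi,
          h.symm.measure_inter_preimage_eq_mul _ _ measurableSet_Iic measurableSet_Ioi,
          Measure.map_apply hX measurableSet_Iic, Measure.map_apply hY measurableSet_Ioi,
          Measure.map_apply hY measurableSet_Iic, Measure.map_apply hX measurableSet_Ioi]
        · refine Set.disjoint_left.2 fun ω hω hω' => ?_
          have h1 : X ω ≤ t := hω.1
          have h2 : t < X ω := hω'.2
          exact absurd h2 (not_lt.2 h1)
        · exact (hY measurableSet_Iic).inter (hX measurableSet_Ioi)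
        · exact ((hX measurableSet_Iic).inter (hY measurableSet_Ioi)).union
            ((hY measurableSet_Iic).inter (hX measurableSet_Ioi))

lemma energy_main {Ω : Type*} [MeasurableSpace Ω] {μ : Measure Ω} [IsProbabilityMeasure μ]
    (X Y X' Y' : Ω → ℝ)
    (hXm : Measurable X) (hYm : Measurable Y) (hX'm : Measurable X') (hY'm : Measurable Y')
    (hXY : IndepFun X Y μ) (hXX' : IndepFun X X' μ) (hYY' : IndepFun Y Y' μ)
    (hX' : μ.map X' = μ.map X) (hY' : μ.map Y' = μ.map Y)
    (hXY1 : Integrable (fun ω => |X ω - Y ω|) μ)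
    (hXX'1 : Integrable (fun ω => |X ω - X' ω|) μ)
    (hYY'1 : Integrable (fun ω => |Y ω - Y' ω|) μ)
    (h0 : 2 * ∫ ω, |X ω - Y ω| ∂μ = ∫ ω, |X ω - X' ω| ∂μ + ∫ ω, |Y ω - Y' ω| ∂μ) :
    μ.map X = μ.map Y := by
  have hmapX : IsProbabilityMeasure (μ.map X) := Measure.isProbabilityMeasure_map hXm.aemeasurable
  have hmapY : IsProbabilityMeasure (μ.map Y) := Measure.isProbabilityMeasure_map hYm.aemeasurable
  set F : ℝ → ℝ≥0∞ := fun t => μ.map X (Iic t) with hF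
  set G : ℝ → ℝ≥0∞ := fun t => μ.map Y (Iic t) with hG
  have hF1 : ∀ t, F t ≤ 1 := fun t => prob_le_one
  have hG1 : ∀ t, G t ≤ 1 := fun t => prob_le_one
  have hFIoi : ∀ t, μ.map X (Ioi t) = 1 - F t := by
    intro t
    rw [← Set.compl_Iic, measure_compl measurableSet_Iic (measure_ne_top _ _), measure_univ]
  have hGIoi : ∀ t, μ.map Y (Ioi t) = 1 - G t := by
    intro t
    rw [← Set.compl_Iic, measure_compl measurableSet_Iic (measure_ne_top _ _), measure_univ]
  -- the three lintegral identities
  have E1 : ∫⁻ ω, ENNReal.ofReal |X ω - Y ω| ∂μ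
      = ∫⁻ t, F t * (1 - G t) + G t * (1 - F t) := by
    rw [energy_key μ X Y hXm hYm hXY]
    simp_rw [hFIoi, hGIoi]
    rfl
  have E2 : ∫⁻ ω, ENNReal.ofReal |X ω - X' ω| ∂μ
      = ∫⁻ t, F t * (1 - F t) + F t * (1 - F t) := by
    rw [energy_key μ X X' hXm hX'm hXX', ]
    simp_rw [hX', hFIoi]
    rfl
  have E3 : ∫⁻ ω, ENNReal.ofReal |Y ω - Y' ω| ∂μ
      = ∫⁻ t, G t * (1 - G t) + G t * (1 - G t) := by
    rw [energy_key μ Y Y' hYm hY'm hYY']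
    simp_rw [hY', hGIoi]
    rfl
  -- transfer h0 to lintegrals
  have habs : ∀ (f : Ω → ℝ), (0:ℝ) ≤ 0 := fun _ => le_refl 0
  have oR : ∀ {f : Ω → ℝ}, Integrable f μ → (∀ ω, 0 ≤ f ω) →
      ENNReal.ofReal (∫ ω, f ω ∂μ) = ∫⁻ ω, ENNReal.ofReal (f ω) ∂μ := by
    intro f hf hnn
    exact ofReal_integral_eq_lintegral_ofReal hf (Filter.Eventually.of_forall hnn)
  have h2 : 2 * ∫⁻ ω, ENNReal.ofReal |X ω - Y ω| ∂μ
      = (∫⁻ ω, ENNReal.ofReal |X ω - X' ω| ∂μ) + ∫⁻ ω, ENNReal.ofReal |Y ω - Y' ω| ∂μ := by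
    rw [← oR hXY1 (fun ω => abs_nonneg _), ← oR hXX'1 (fun ω => abs_nonneg _),
      ← oR hYY'1 (fun ω => abs_nonneg _), ← ENNReal.ofReal_add (integral_nonneg
        (fun ω => abs_nonneg _)) (integral_nonneg (fun ω => abs_nonneg _)), ← h0,
      ENNReal.ofReal_mul (by norm_num : (0:ℝ) ≤ 2)]
    norm_num
  -- measurability of F and G
  have hFmeas : Measurable F := Monotone.measurable (fun s t hst => measure_mono (Iic_subset_Iic.2 hst))
  have hGmeas : Measurable G := Monotone.measurable (fun s t hst => measure_mono (Iic_subset_Iic.2 hst))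
  set D : ℝ → ℝ≥0∞ := fun t => (F t - G t) ^ 2 + (G t - F t) ^ 2 with hD
  have hDmeas : Measurable D := ((hFmeas.sub hGmeas).pow_const 2).add ((hGmeas.sub hFmeas).pow_const 2)
  -- pointwise identity integrated
  have E4 : 2 * (∫⁻ t, F t * (1 - G t) + G t * (1 - F t))
      = (∫⁻ t, F t * (1 - F t) + F t * (1 - F t))
        + ((∫⁻ t, G t * (1 - G t) + G t * (1 - G t)) + 2 * ∫⁻ t, D t) := by
    rw [← lintegral_const_mul' 2 _ (by norm_num), ← lintegral_const_mul' 2 _ (by norm_num)]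
    rw [← lintegral_add_left (by fun_prop : Measurable fun t => G t * (1 - G t) + G t * (1 - G t))
      ]
    rw [← lintegral_add_left (by fun_prop : Measurable fun t => F t * (1 - F t) + F t * (1 - F t))]
    exact lintegral_congr fun t => energy_pt (F t) (G t) (hF1 t) (hG1 t)
  have hfin : (∫⁻ ω, ENNReal.ofReal |X ω - X' ω| ∂μ) + ∫⁻ ω, ENNReal.ofReal |Y ω - Y' ω| ∂μ ≠ ⊤ := by
    have f1 := (hasFiniteIntegral_iff_ofReal (Filter.Eventually.of_forall
      fun ω => abs_nonneg (X ω - X' ω))).1 hXX'1.2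
    have f2 := (hasFiniteIntegral_iff_ofReal (Filter.Eventually.of_forall
      fun ω => abs_nonneg (Y ω - Y' ω))).1 hYY'1.2
    exact ENNReal.add_ne_top.2 ⟨f1.ne, f2.ne⟩
  -- conclude lintegral of D is zero
  have hD0 : ∫⁻ t, D t = 0 := by
    have := E4
    rw [← E1, ← E2, ← E3, h2] at this
    -- this : S = S + 2 * ∫⁻ D  with S ≠ ⊤
    have h5 : (∫⁻ ω, ENNReal.ofReal |X ω - X' ω| ∂μ) + (∫⁻ ω, ENNReal.ofReal |Y ω - Y' ω| ∂μ) + 0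
        = (∫⁻ ω, ENNReal.ofReal |X ω - X' ω| ∂μ) + (∫⁻ ω, ENNReal.ofReal |Y ω - Y' ω| ∂μ)
          + 2 * ∫⁻ t, D t := by
      rw [add_zero, add_assoc]; exact this
    have := (ENNReal.add_right_inj hfin).1 h5
    rcases mul_eq_zero.1 this.symm with h | h
    · norm_num at h
    · exact h
  -- F = G almost everywhere
  have hae : ∀ᵐ t ∂(volume : Measure ℝ), F t = G t := by
    have := (lintegral_eq_zero_iff hDmeas).1 hD0
    filter_upwards [this] with t ht
    simp only [Pi.zero_apply, hD, add_eq_zero, pow_eq_zero_iff (two_ne_zero)] at ht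
    exact le_antisymm (tsub_eq_zero_iff_le.1 ht.1) (tsub_eq_zero_iff_le.1 ht.2)
  -- upgrade to everywhere using right continuity of measures of Iic
  have hall : ∀ t, F t = G t := by
    intro t
    have hN : (volume : Measure ℝ) {s | ¬ F s = G s} = 0 := hae
    have hsn : ∀ n : ℕ, ∃ s, s ∈ Set.Ioo t (t + 1 / (n + 1)) ∧ F s = G s := by
      intro n
      by_contra hcon
      push_neg at hcon
      have hsub : Set.Ioo t (t + 1 / (n + 1)) ⊆ {s | ¬ F s = G s} :=
        fun s hs => hcon s hs
      have := measure_mono_null hsub hN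
      rw [Real.volume_Ioo] at this
      have hpos : (0:ℝ) < 1 / (n + 1) := by positivity
      simp only [add_sub_cancel_left] at this
      rw [ENNReal.ofReal_eq_zero] at this
      linarith
    choose s hs hFG using hsn
    have hIic : Iic t = ⋂ n, Iic (s n) := by
      ext x
      simp only [mem_Iic, mem_iInter]
      constructor
      · intro hx n
        exact hx.trans (hs n).1.le
      · intro hx
        by_contra hlt
        push_neg at hlt
        obtain ⟨n, hn⟩ := exists_nat_one_div_lt (by linarith : (0:ℝ) < x - t)
        have := (hs n).2
        have hxn := hx n
        have : s n < x := by
          calc s n < t + 1 / (n + 1) := (hs n).2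
          _ ≤ x := by linarith [hn]
        linarith
    have hdir : Directed (· ⊇ ·) (fun n => Iic (s n)) := by
      intro i j
      rcases le_total (s i) (s j) with h | h
      · exact ⟨i, subset_rfl, Iic_subset_Iic.2 h⟩
      · exact ⟨j, Iic_subset_Iic.2 h, subset_rfl⟩
    have hFt : F t = ⨅ n, F (s n) := by
      rw [hF]
      simp only
      rw [hIic]
      exact Directed.measure_iInter (fun n => measurableSet_Iic.nullMeasurableSet) hdir
        ⟨0, measure_ne_top _ _⟩
    have hGt : G t = ⨅ n, G (s n) := by
      rw [hG]
      simp only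
      rw [hIic]
      exact Directed.measure_iInter (fun n => measurableSet_Iic.nullMeasurableSet) hdir
        ⟨0, measure_ne_top _ _⟩
    rw [hFt, hGt]
    exact iInf_congr hFG
  exact Measure.ext_of_Iic (μ.map X) (μ.map Y) hall

/-- If the energy distance between independent integrable real random variables
`X` and `Y` is zero, then `X` and `Y` are identically distributed. -/
theorem eq_distrib_of_energy_distance_eq_zero
    {Ω : Type*} [MeasurableSpace Ω] {μ : Measure Ω} [IsProbabilityMeasure μ]
    (X Y X' Y' : Ω → ℝ)
    (hIndep : iIndepFun ![X, Y, X', Y'] μ)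
    (hX' : IdentDistrib X' X μ μ) (hY' : IdentDistrib Y' Y μ μ)
    (hX1 : Integrable X μ) (hY1 : Integrable Y μ)
    (h0 : 2 * ∫ ω, |X ω - Y ω| ∂μ - ∫ ω, |X ω - X' ω| ∂μ
        - ∫ ω, |Y ω - Y' ω| ∂μ = 0) :
    μ.map X = μ.map Y := by
  -- integrability of X' and Y'
  have hX'1 : Integrable X' μ := hX'.integrable_iff.2 hX1
  have hY'1 : Integrable Y' μ := hY'.integrable_iff.2 hY1
  -- measurable representatives
  have haX : AEMeasurable X μ := hX1.aemeasurable
  have haY : AEMeasurable Y μ := hY1.aemeasurable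
  have haX' : AEMeasurable X' μ := hX'.aemeasurable_fst
  have haY' : AEMeasurable Y' μ := hY'.aemeasurable_fst
  set Xm := haX.mk X with hXm_def
  set Ym := haY.mk Y with hYm_def
  set Xm' := haX'.mk X' with hXm'_def
  set Ym' := haY'.mk Y' with hYm'_def
  have heX : X =ᵐ[μ] Xm := haX.ae_eq_mk
  have heY : Y =ᵐ[μ] Ym := haY.ae_eq_mk
  have heX' : X' =ᵐ[μ] Xm' := haX'.ae_eq_mk
  have heY' : Y' =ᵐ[μ] Ym' := haY'.ae_eq_mk
  have hXmm : Measurable Xm := haX.measurable_mk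
  have hYmm : Measurable Ym := haY.measurable_mk
  have hXm'm : Measurable Xm' := haX'.measurable_mk
  have hYm'm : Measurable Ym' := haY'.measurable_mk
  -- pairwise independence
  have hXY : IndepFun Xm Ym μ := by
    have h := hIndep.indepFun (show (0 : Fin 4) ≠ 1 by decide)
    simp only [Matrix.cons_val_zero, Matrix.cons_val_one, Matrix.head_cons] at h
    exact (show IndepFun X Y μ from h).congr heX heY
  have hXX' : IndepFun Xm Xm' μ := by
    have h := hIndep.indepFun (show (0 : Fin 4) ≠ 2 by decide)
    simp only [Matrix.cons_val_zero, Matrix.cons_val_two, Matrix.tail_cons,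
      Matrix.head_cons] at h
    exact (show IndepFun X X' μ from h).congr heX heX'
  have hYY' : IndepFun Ym Ym' μ := by
    have h := hIndep.indepFun (show (1 : Fin 4) ≠ 3 by decide)
    simp only [Matrix.cons_val_one, Matrix.cons_val_three, Matrix.tail_cons,
      Matrix.head_cons] at h
    exact (show IndepFun Y Y' μ from h).congr heY heY'
  -- identically distributed copies, in terms of maps
  have hmapX' : μ.map Xm' = μ.map Xm := by
    rw [← Measure.map_congr heX', ← Measure.map_congr heX, hX'.map_eq]
  have hmapY' : μ.map Ym' = μ.map Ym := by
    rw [← Measure.map_congr heY', ← Measure.map_congr heY, hY'.map_eq]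
  -- integrability of the absolute differences
  have hXY1 : Integrable (fun ω => |Xm ω - Ym ω|) μ := by
    have : Integrable (fun ω => |X ω - Y ω|) μ := (hX1.sub hY1).abs
    apply this.congr
    filter_upwards [heX, heY] with ω h1 h2
    rw [h1, h2]
  have hXX'1 : Integrable (fun ω => |Xm ω - Xm' ω|) μ := by
    have : Integrable (fun ω => |X ω - X' ω|) μ := (hX1.sub hX'1).abs
    apply this.congr
    filter_upwards [heX, heX'] with ω h1 h2
    rw [h1, h2]
  have hYY'1 : Integrable (fun ω => |Ym ω - Ym' ω|) μ := by
    have : Integrable (fun ω => |Y ω - Y' ω|) μ := (hY1.sub hY'1).abs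
    apply this.congr
    filter_upwards [heY, heY'] with ω h1 h2
    rw [h1, h2]
  -- transfer the energy identity
  have hi1 : ∫ ω, |Xm ω - Ym ω| ∂μ = ∫ ω, |X ω - Y ω| ∂μ := by
    apply integral_congr_ae
    filter_upwards [heX, heY] with ω h1 h2
    rw [h1, h2]
  have hi2 : ∫ ω, |Xm ω - Xm' ω| ∂μ = ∫ ω, |X ω - X' ω| ∂μ := by
    apply integral_congr_ae
    filter_upwards [heX, heX'] with ω h1 h2
    rw [h1, h2]
  have hi3 : ∫ ω, |Ym ω - Ym' ω| ∂μ = ∫ ω, |Y ω - Y' ω| ∂μ := by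
    apply integral_congr_ae
    filter_upwards [heY, heY'] with ω h1 h2
    rw [h1, h2]
  have h0' : 2 * ∫ ω, |Xm ω - Ym ω| ∂μ
      = ∫ ω, |Xm ω - Xm' ω| ∂μ + ∫ ω, |Ym ω - Ym' ω| ∂μ := by
    rw [hi1, hi2, hi3]; linarith
  have := energy_main Xm Ym Xm' Ym' hXmm hYmm hXm'm hYm'm hXY hXX' hYY'
    hmapX' hmapY' hXY1 hXX'1 hYY'1 h0'
  rw [Measure.map_congr heX, Measure.map_congr heY]
  exact this
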